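/- Let α ∈ (1,2). For λ > 0 and r ∈ [0,1] let v^0_r(λ) ∈ [0, λ^{1/α}) be the unique solution of ∫_0^{v^0_r(λ)} dy/(λ − y^α) = r. Then lim_{λ→0+} λ^{1−α} ∫_0^1 v^0_r(λ)^{α−1} dr = 1/α. -/
import Mathlib


open Set Filter MeasureTheory

lemma denom_pos' {α lam : ℝ} (hα : 0 < α) (hlam : 0 < lam) {w y : ℝ}
    (hw : w < lam ^ (1/α)) (hy0 : 0 ≤ y) (hyw : y ≤ w) : 0 < lam - y ^ α := by
  have h1 : y ^ α ≤ w ^ α := Real.rpow_le_rpow hy0 hyw hα.le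
  have hw0 : 0 ≤ w := le_trans hy0 hyw
  have h2 : w ^ α < (lam ^ (1/α)) ^ α := Real.rpow_lt_rpow hw0 hw hα
  have h3 : (lam ^ (1/α)) ^ α = lam := by
    rw [← Real.rpow_mul hlam.le, one_div, inv_mul_cancel₀ hα.ne', Real.rpow_one]
  linarith

lemma integrand_intInt {α lam : ℝ} (hα : 0 < α) (hlam : 0 < lam) {w a b : ℝ}
    (hw : w < lam ^ (1/α)) (ha : 0 ≤ a) (hab : a ≤ b) (hbw : b ≤ w) :
    IntervalIntegrable (fun y => (lam - y ^ α)⁻¹) volume a b := by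
  apply ContinuousOn.intervalIntegrable
  rw [Set.uIcc_of_le hab]
  apply ContinuousOn.inv₀
  · apply ContinuousOn.sub continuousOn_const
    exact (continuous_iff_continuousAt.2 fun x =>
      Real.continuousAt_rpow_const x α (Or.inr hα.le)).continuousOn
  · intro y hy
    exact (denom_pos' hα hlam hw (hy.1.trans' ha) (hy.2.trans hbw)).ne'

lemma v_bounds {α lam : ℝ} (hα1 : 1 < α) (hlam : 0 < lam) {r v : ℝ}
    (hr : r ∈ Set.Icc (0:ℝ) 1) (hv : v ∈ Set.Ico 0 (lam ^ (1/α)))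
    (hint : ∫ y in (0:ℝ)..v, (lam - y ^ α)⁻¹ = r) :
    lam * r * (1 - lam ^ (α - 1)) ≤ v ∧ v ≤ lam * r := by
  have hα : 0 < α := lt_trans one_pos hα1
  have hvI : IntervalIntegrable (fun y => (lam - y ^ α)⁻¹) volume 0 v :=
    integrand_intInt hα hlam hv.2 le_rfl hv.1 le_rfl
  have hub : v ≤ lam * r := by
    have h1 : v * lam⁻¹ ≤ r := by
      rw [← hint]
      have := intervalIntegral.integral_mono_on (f := fun _ : ℝ => lam⁻¹)
        (g := fun y => (lam - y ^ α)⁻¹) hv.1 intervalIntegrable_const hvI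
        (fun y hy => by
          have h2 : 0 < lam - y ^ α := denom_pos' hα hlam hv.2 hy.1 hy.2
          have h3 : lam - y ^ α ≤ lam := by
            have := Real.rpow_nonneg hy.1 α; linarith
          exact inv_anti₀ h2 h3)
      simpa [smul_eq_mul] using this
    calc v = v * lam⁻¹ * lam := by field_simp
    _ ≤ r * lam := mul_le_mul_of_nonneg_right h1 hlam.le
    _ = lam * r := mul_comm _ _
  refine ⟨?_, hub⟩
  have hvα : 0 < lam - v ^ α := denom_pos' hα hlam hv.2 hv.1 le_rfl
  have hlb : r ≤ v * (lam - v ^ α)⁻¹ := by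
    rw [← hint]
    have := intervalIntegral.integral_mono_on (g := fun _ : ℝ => (lam - v ^ α)⁻¹)
      (f := fun y => (lam - y ^ α)⁻¹) hv.1 hvI intervalIntegrable_const
      (fun y hy => by
        have h2 : 0 < lam - y ^ α := denom_pos' hα hlam hv.2 hy.1 hy.2
        have h3 : y ^ α ≤ v ^ α := Real.rpow_le_rpow hy.1 hy.2 hα.le
        exact inv_anti₀ hvα (by linarith))
    simpa [smul_eq_mul] using this
  have key : r * (lam - v ^ α) ≤ v := by
    have h5 := mul_le_mul_of_nonneg_right hlb hvα.le
    calc r * (lam - v ^ α) ≤ v * (lam - v ^ α)⁻¹ * (lam - v ^ α) := h5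
    _ = v := by field_simp
  have hvub : v ^ α ≤ lam ^ α * r ^ α := by
    calc v ^ α ≤ (lam * r) ^ α := Real.rpow_le_rpow hv.1 hub hα.le
    _ = lam ^ α * r ^ α := Real.mul_rpow hlam.le hr.1
  have hr1 : r ^ α ≤ 1 := Real.rpow_le_one hr.1 hr.2 hα.le
  have hlamα : lam ^ α = lam * lam ^ (α - 1) := by
    have h := Real.rpow_add hlam 1 (α - 1)
    rw [Real.rpow_one] at h
    rw [← h]; congr 1; ring
  have h6 : r * v ^ α ≤ r * (lam ^ α * r ^ α) :=
    mul_le_mul_of_nonneg_left hvub hr.1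
  have hlα0 : 0 ≤ lam ^ α := Real.rpow_nonneg hlam.le α
  have h7 : r * lam ^ α * r ^ α ≤ r * lam ^ α * 1 :=
    mul_le_mul_of_nonneg_left hr1 (mul_nonneg hr.1 hlα0)
  have h8 : r * lam ^ α = r * (lam * lam ^ (α - 1)) := by rw [hlamα]
  nlinarith [h6, h7, h8, key]

lemma main_bounds {α : ℝ} (hα1 : 1 < α)
    {lam : ℝ} (hlam : lam ∈ Set.Ioo (0:ℝ) 1)
    (v0 : ℝ → ℝ → ℝ)
    (hv : ∀ r ∈ Set.Icc (0:ℝ) 1,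
      v0 r lam ∈ Set.Ico 0 (lam ^ (1 / α)) ∧
        ∫ y in (0:ℝ)..v0 r lam, (lam - y ^ α)⁻¹ = r) :
    (1 - lam ^ (α-1)) ^ (α-1) * (1/α) ≤
      lam ^ (1 - α) * ∫ r in (0:ℝ)..1, v0 r lam ^ (α - 1) ∧
    lam ^ (1 - α) * (∫ r in (0:ℝ)..1, v0 r lam ^ (α - 1)) ≤ 1/α := by
  have hα : 0 < α := lt_trans one_pos hα1
  have hl0 : 0 < lam := hlam.1
  have hIr : IntervalIntegrable (fun r : ℝ => r ^ (α-1)) volume 0 1 :=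
    intervalIntegral.intervalIntegrable_rpow' (by linarith)
  have hint_r : ∫ r in (0:ℝ)..1, r ^ (α-1) = 1/α := by
    rw [integral_rpow (Or.inl (by linarith))]
    have h1 : α - 1 + 1 = α := by ring
    rw [h1, Real.one_rpow, Real.zero_rpow hα.ne', sub_zero]
  have hc : lam ^ (α-1) < 1 := Real.rpow_lt_one hl0.le hlam.2 (by linarith)
  set c : ℝ := 1 - lam ^ (α-1) with hcdef
  have hc0 : 0 < c := by simp only [hcdef]; linarith
  -- monotonicity of r ↦ v0 r lam ^ (α-1) on Icc 0 1
  have hmono : MonotoneOn (fun r => v0 r lam ^ (α-1)) (Set.Icc 0 1) := by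
    intro r1 h1 r2 h2 h12
    obtain ⟨hv1, hi1⟩ := hv r1 h1
    obtain ⟨hv2, hi2⟩ := hv r2 h2
    have hvle : v0 r1 lam ≤ v0 r2 lam := by
      by_contra hlt
      push_neg at hlt
      have hI1 : IntervalIntegrable (fun y => (lam - y ^ α)⁻¹) volume 0 (v0 r2 lam) :=
        integrand_intInt hα hl0 hv2.2 le_rfl hv2.1 le_rfl
      have hI2 : IntervalIntegrable (fun y => (lam - y ^ α)⁻¹) volume (v0 r2 lam) (v0 r1 lam) :=
        integrand_intInt hα hl0 hv1.2 hv2.1 hlt.le le_rfl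
      have hsplit := intervalIntegral.integral_add_adjacent_intervals hI1 hI2
      have hpos : 0 < ∫ y in v0 r2 lam..v0 r1 lam, (lam - y ^ α)⁻¹ := by
        apply intervalIntegral.intervalIntegral_pos_of_pos_on hI2 _ hlt
        intro x hx
        exact inv_pos.2 (denom_pos' hα hl0 hv1.2 (hv2.1.trans hx.1.le) hx.2.le)
      rw [hi1, hi2] at hsplit
      linarith
    exact Real.rpow_le_rpow hv1.1 hvle (by linarith)
  have hIv : IntervalIntegrable (fun r => v0 r lam ^ (α-1)) volume 0 1 := by
    apply MonotoneOn.intervalIntegrable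
    rwa [Set.uIcc_of_le (by norm_num : (0:ℝ) ≤ 1)]
  have hpow : 0 < lam ^ (1-α) := Real.rpow_pos_of_pos hl0 _
  have hcan : lam ^ (1-α) * lam ^ (α-1) = 1 := by
    rw [← Real.rpow_add hl0]; norm_num
  constructor
  · -- lower bound
    have hptw : ∀ r ∈ Set.Icc (0:ℝ) 1,
        (lam * c) ^ (α-1) * r ^ (α-1) ≤ v0 r lam ^ (α-1) := by
      intro r hr
      obtain ⟨hvm, hi⟩ := hv r hr
      have hb := (v_bounds hα1 hl0 hr hvm hi).1
      have heq : (lam * c) ^ (α-1) * r ^ (α-1) = (lam * r * c) ^ (α-1) := by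
        rw [← Real.mul_rpow (by positivity) hr.1, mul_right_comm]
      rw [heq]
      exact Real.rpow_le_rpow (mul_nonneg (mul_nonneg hl0.le hr.1) hc0.le) hb (by linarith)
    have hInt1 : IntervalIntegrable (fun r : ℝ => (lam*c)^(α-1) * r^(α-1)) volume 0 1 :=
      hIr.const_mul _
    have hle1 := intervalIntegral.integral_mono_on (by norm_num : (0:ℝ) ≤ 1) hInt1 hIv hptw
    rw [intervalIntegral.integral_const_mul, hint_r] at hle1
    have h9 := mul_le_mul_of_nonneg_left hle1 hpow.le
    calc c ^ (α-1) * (1/α)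
        = lam ^ (1-α) * ((lam*c) ^ (α-1) * (1/α)) := by
          rw [Real.mul_rpow hl0.le hc0.le]
          calc c ^ (α-1) * (1/α) = (lam ^ (1-α) * lam ^ (α-1)) * (c ^ (α-1) * (1/α)) := by
                rw [hcan, one_mul]
          _ = lam ^ (1-α) * (lam ^ (α-1) * c ^ (α-1) * (1/α)) := by ring
    _ ≤ _ := h9
  · -- upper bound
    have hptw : ∀ r ∈ Set.Icc (0:ℝ) 1,
        v0 r lam ^ (α-1) ≤ lam ^ (α-1) * r ^ (α-1) := by
      intro r hr
      obtain ⟨hvm, hi⟩ := hv r hr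
      have hb := (v_bounds hα1 hl0 hr hvm hi).2
      calc v0 r lam ^ (α-1) ≤ (lam * r) ^ (α-1) :=
            Real.rpow_le_rpow hvm.1 hb (by linarith)
      _ = lam ^ (α-1) * r ^ (α-1) := Real.mul_rpow hl0.le hr.1
    have hInt1 : IntervalIntegrable (fun r : ℝ => lam^(α-1) * r^(α-1)) volume 0 1 :=
      hIr.const_mul _
    have hle1 := intervalIntegral.integral_mono_on (by norm_num : (0:ℝ) ≤ 1) hIv hInt1 hptw
    rw [intervalIntegral.integral_const_mul, hint_r] at hle1
    have h9 := mul_le_mul_of_nonneg_left hle1 hpow.le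
    calc lam ^ (1-α) * (∫ r in (0:ℝ)..1, v0 r lam ^ (α - 1))
        ≤ lam ^ (1-α) * (lam ^ (α-1) * (1/α)) := h9
    _ = (lam ^ (1-α) * lam ^ (α-1)) * (1/α) := by ring
    _ = 1/α := by rw [hcan, one_mul]

theorem stable_v0_integral_asymptotics
    (α : ℝ) (hα1 : 1 < α) (hα2 : α < 2)
    (v0 : ℝ → ℝ → ℝ)
    (hv0 : ∀ lam > (0:ℝ), ∀ r ∈ Set.Icc (0:ℝ) 1,
      v0 r lam ∈ Set.Ico 0 (lam ^ (1 / α)) ∧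
        ∫ y in (0:ℝ)..v0 r lam, (lam - y ^ α)⁻¹ = r) :
    Filter.Tendsto
      (fun lam : ℝ => lam ^ (1 - α) * ∫ r in (0:ℝ)..1, v0 r lam ^ (α - 1))
      (nhdsWithin 0 (Set.Ioi 0)) (nhds (1 / α)) := by
  have hα : 0 < α := lt_trans one_pos hα1
  have hlow : Tendsto (fun lam : ℝ => (1 - lam ^ (α-1)) ^ (α-1) * (1/α))
      (nhdsWithin 0 (Set.Ioi 0)) (nhds (1/α)) := by
    have h1 : Tendsto (fun lam : ℝ => lam ^ (α-1)) (nhdsWithin 0 (Set.Ioi 0)) (nhds 0) := by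
      have := (Real.continuousAt_rpow_const 0 (α-1) (Or.inr (by linarith))).tendsto
      rw [Real.zero_rpow (by intro h; linarith : α - 1 ≠ 0)] at this
      exact this.mono_left nhdsWithin_le_nhds
    have h2 : Tendsto (fun lam : ℝ => 1 - lam ^ (α-1)) (nhdsWithin 0 (Set.Ioi 0)) (nhds 1) := by
      simpa using tendsto_const_nhds.sub h1
    have h3 : Tendsto (fun x : ℝ => x ^ (α-1)) (nhds 1) (nhds 1) := by
      have := (Real.continuousAt_rpow_const 1 (α-1) (Or.inl one_ne_zero)).tendsto
      rwa [Real.one_rpow] at this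
    have h4 := (h3.comp h2).mul (tendsto_const_nhds (x := 1/α))
    simpa using h4
  have hev : ∀ᶠ lam in nhdsWithin (0:ℝ) (Set.Ioi 0), lam ∈ Set.Ioo (0:ℝ) 1 :=
    Ioo_mem_nhdsGT_of_mem (by norm_num)
  apply tendsto_of_tendsto_of_tendsto_of_le_of_le' hlow tendsto_const_nhds
  · filter_upwards [hev] with lam hlam
    exact (main_bounds hα1 hlam v0 (hv0 lam hlam.1)).1
  · filter_upwards [hev] with lam hlam
    exact (main_bounds hα1 hlam v0 (hv0 lam hlam.1)).2
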